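/- Let X₁, X₂, … be independent unit-rate exponential random variables and let γ ∈ (0,∞). With M_n = max_{1 ≤ i ≤ n} { i^γ X_i }, we have M_n / n^γ − β_n → G in distribution as n → ∞, where β_n = log(n/γ) − log log n and G is a standard Gumbel random variable; that is, for every x ∈ ℝ, P(M_n/n^γ − β_n ≤ x) → exp(−e^{−x}). -/

import Mathlib

open MeasureTheory ProbabilityTheory Filter


open MeasureTheory ProbabilityTheory Filter

namespace GumbelAux

lemma abs_log_one_sub_add_le {u : ℝ} (h0 : 0 ≤ u) (h2 : u ≤ 1/2) :
    |Real.log (1 - u) + u| ≤ 2 * u ^ 2 := by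
  have h1 : (0:ℝ) < 1 - u := by linarith
  have hupper : Real.log (1 - u) + u ≤ 0 := by
    have := Real.log_le_sub_one_of_pos h1
    linarith
  have hlow : -(2 * u ^ 2) ≤ Real.log (1 - u) + u := by
    have ht : (0:ℝ) < 1 + (u + 2*u^2) := by nlinarith
    have hexp : Real.exp (-(u + 2*u^2)) ≤ 1 - u := by
      have h3 : Real.exp (-(u + 2*u^2)) ≤ (1 + (u + 2*u^2))⁻¹ := by
        rw [Real.exp_neg]
        have h4 : 1 + (u + 2*u^2) ≤ Real.exp (u + 2*u^2) := by
          have := Real.add_one_le_exp (u + 2*u^2); linarith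
        exact inv_anti₀ ht h4
      have h5 : (1 + (u + 2*u^2))⁻¹ ≤ 1 - u := by
        rw [inv_eq_one_div, div_le_iff₀ ht]; nlinarith
      linarith
    have h6 : -(u + 2*u^2) ≤ Real.log (1 - u) := by
      have := Real.log_le_log (Real.exp_pos _) hexp
      rwa [Real.log_exp] at this
    linarith
  rw [abs_le]; constructor <;> linarith

end GumbelAux

open MeasureTheory ProbabilityTheory Filter

namespace GumbelAux2

lemma exp_chord {g Y t : ℝ} (hY : 0 < Y) (ht0 : 0 ≤ t) (htY : t ≤ Y) :
    Real.exp (g * t) ≤ 1 + t * ((Real.exp (g * Y) - 1) / Y) := by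
  have ha : (0:ℝ) ≤ 1 - t/Y := by
    rw [sub_nonneg]; exact div_le_one_of_le₀ htY hY.le
  have hb : (0:ℝ) ≤ t/Y := by positivity
  have hab : (1 - t/Y) + t/Y = 1 := by ring
  have h := convexOn_exp.2 (Set.mem_univ (0:ℝ)) (Set.mem_univ (g*Y)) ha hb hab
  simp only [smul_eq_mul, mul_zero, zero_add, Real.exp_zero, mul_one] at h
  have harg : t/Y * (g*Y) = g * t := by field_simp
  rw [harg] at h
  have heq : (1 - t/Y) + t/Y * Real.exp (g*Y) = 1 + t * ((Real.exp (g * Y) - 1) / Y) := by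
    field_simp; ring
  linarith

lemma integral_eval {p : ℝ} (hp : 0 < p) (n : ℕ) (hn : 1 ≤ n) :
    ∫ s in (0:ℝ)..((0:ℝ) + n), (s/(n:ℝ)) ^ p = (n:ℝ)/(p+1) := by
  have hn0 : (0:ℝ) < n := by exact_mod_cast hn
  have hcong : Set.EqOn (fun s : ℝ => (s/(n:ℝ)) ^ p) (fun s : ℝ => ((n:ℝ) ^ p)⁻¹ * s ^ p)
      (Set.uIcc (0:ℝ) ((0:ℝ) + n)) := by
    intro s hs
    rw [Set.uIcc_of_le (by positivity)] at hs
    have hs0 : 0 ≤ s := hs.1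
    simp only
    rw [Real.div_rpow hs0 hn0.le, div_eq_inv_mul]
  rw [intervalIntegral.integral_congr hcong, intervalIntegral.integral_const_mul,
    integral_rpow (Or.inl (by linarith))]
  rw [zero_add, Real.zero_rpow (by positivity), Real.rpow_add hn0, Real.rpow_one]
  field_simp
  ring

lemma hmono_aux {p : ℝ} (hp : 0 < p) (n : ℕ) :
    MonotoneOn (fun s : ℝ => (s/(n:ℝ)) ^ p) (Set.Icc (0:ℝ) ((0:ℝ) + n)) := by
  intro s hs t ht hst
  have hsn : 0 ≤ s / (n:ℝ) := by
    have := hs.1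
    positivity
  have : s / (n:ℝ) ≤ t / n := by
    rcases Nat.eq_zero_or_pos n with h | h
    · simp [h]
    · have hn0 : (0:ℝ) < n := by exact_mod_cast h
      gcongr
  exact Real.rpow_le_rpow hsn this hp.le

end GumbelAux2

namespace GumbelAux2

lemma sum_shift (f : ℕ → ℝ) (n : ℕ) :
    ∑ i ∈ Finset.range n, f (i+1) = ∑ i ∈ Finset.Icc 1 n, f i := by
  induction n with
  | zero => simp
  | succ n ih => rw [Finset.sum_range_succ, ih, Finset.sum_Icc_succ_top (by omega)]

lemma le_sum_pow {p : ℝ} (hp : 0 < p) (n : ℕ) (hn : 1 ≤ n) :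
    (n:ℝ)/(p+1) ≤ ∑ i ∈ Finset.Icc 1 n, ((i:ℝ)/n) ^ p := by
  have h := (hmono_aux hp n).integral_le_sum
  rw [integral_eval hp n hn] at h
  refine h.trans_eq ?_
  rw [← sum_shift (fun i => ((i:ℝ)/n) ^ p) n]
  apply Finset.sum_congr rfl
  intro i _
  norm_num

lemma sum_pow_le {p : ℝ} (hp : 0 < p) (n : ℕ) (hn : 1 ≤ n) :
    ∑ i ∈ Finset.Icc 1 n, ((i:ℝ)/n) ^ p ≤ (n:ℝ)/(p+1) + 1 := by
  have hn0 : (0:ℝ) < n := by exact_mod_cast hn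
  have h := (hmono_aux hp n).sum_le_integral
  rw [integral_eval hp n hn] at h
  have hf0 : ((0:ℝ)/n) ^ p = 0 := by
    rw [zero_div, Real.zero_rpow hp.ne']
  have hfn : (((n:ℕ):ℝ)/n) ^ p = 1 := by
    rw [div_self hn0.ne', Real.one_rpow]
  have hsplit : ∑ i ∈ Finset.Icc 1 n, ((i:ℝ)/n) ^ p
      = (∑ i ∈ Finset.range n, (((i:ℕ):ℝ)/n) ^ p) + (((n:ℕ):ℝ)/n) ^ p - ((0:ℝ)/n) ^ p := by
    rw [← sum_shift (fun i => ((i:ℝ)/n) ^ p) n]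
    have h1 := Finset.sum_range_succ (fun i => (((i:ℕ):ℝ)/n) ^ p) n
    have h2 := Finset.sum_range_succ' (fun i => (((i:ℕ):ℝ)/n) ^ p) n
    push_cast at h1 h2 ⊢
    rw [← h1, h2]
    push_cast
    ring
  rw [hsplit, hfn, hf0]
  have : ∑ i ∈ Finset.range n, (((i:ℕ):ℝ)/n) ^ p ≤ (n:ℝ)/(p+1) := by
    refine le_trans ?_ h
    apply le_of_eq
    apply Finset.sum_congr rfl
    intro i _
    norm_num
  linarith

end GumbelAux2

open MeasureTheory ProbabilityTheory Filter

namespace GumbelAux3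

lemma ratio_pos {n i : ℕ} (hi1 : 1 ≤ i) (hin : i ≤ n) : (0:ℝ) < (n:ℝ)/i := by
  have h1 : (0:ℝ) < i := by exact_mod_cast hi1
  have h2 : (0:ℝ) < n := by exact_mod_cast le_trans hi1 hin
  positivity

lemma one_le_ratio {n i : ℕ} (hi1 : 1 ≤ i) (hin : i ≤ n) : (1:ℝ) ≤ (n:ℝ)/i := by
  have h1 : (0:ℝ) < i := by exact_mod_cast hi1
  rw [le_div_iff₀ h1, one_mul]
  exact_mod_cast hin

lemma inv_ratio {n i : ℕ} (hi1 : 1 ≤ i) (hin : i ≤ n) : ((i:ℝ)/n) = ((n:ℝ)/i)⁻¹ := by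
  have h1 : (0:ℝ) < i := by exact_mod_cast hi1
  have h2 : (0:ℝ) < n := by exact_mod_cast le_trans hi1 hin
  field_simp

lemma pow_ratio_eq {s : ℝ} {n i : ℕ} (hi1 : 1 ≤ i) (hin : i ≤ n) :
    ((i:ℝ)/n) ^ s = Real.exp (-(s * Real.log ((n:ℝ)/i))) := by
  have hr := ratio_pos hi1 hin
  have hpos : (0:ℝ) < (i:ℝ)/n := by
    rw [inv_ratio hi1 hin]; positivity
  rw [Real.rpow_def_of_pos hpos, inv_ratio hi1 hin, Real.log_inv]
  congr 1; ring

lemma term_upper {γ a : ℝ} (hγ : 0 < γ) (ha : 0 ≤ a) {n i : ℕ} (hi1 : 1 ≤ i) (hin : i ≤ n) :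
    Real.exp (-(((n:ℝ)/i) ^ γ * a)) ≤ Real.exp (-a) * ((i:ℝ)/n) ^ (γ * a) := by
  have hr := ratio_pos hi1 hin
  have hlog : 0 ≤ Real.log ((n:ℝ)/i) := Real.log_nonneg (one_le_ratio hi1 hin)
  have h1 : 1 + γ * Real.log ((n:ℝ)/i) ≤ ((n:ℝ)/i) ^ γ := by
    rw [Real.rpow_def_of_pos hr]
    have := Real.add_one_le_exp (Real.log ((n:ℝ)/i) * γ)
    linarith
  have h2 : (1 + γ * Real.log ((n:ℝ)/i)) * a ≤ ((n:ℝ)/i) ^ γ * a :=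
    mul_le_mul_of_nonneg_right h1 ha
  calc Real.exp (-(((n:ℝ)/i) ^ γ * a))
      ≤ Real.exp (-((1 + γ * Real.log ((n:ℝ)/i)) * a)) := by
        apply Real.exp_le_exp.mpr; linarith
    _ = Real.exp (-a) * ((i:ℝ)/n) ^ (γ * a) := by
        rw [pow_ratio_eq hi1 hin, ← Real.exp_add]; congr 1; ring

lemma exp_chord {g Y t : ℝ} (hY : 0 < Y) (ht0 : 0 ≤ t) (htY : t ≤ Y) :
    Real.exp (g * t) ≤ 1 + t * ((Real.exp (g * Y) - 1) / Y) := by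
  have ha : (0:ℝ) ≤ 1 - t/Y := by
    rw [sub_nonneg]; exact div_le_one_of_le₀ htY hY.le
  have hb : (0:ℝ) ≤ t/Y := by positivity
  have hab : (1 - t/Y) + t/Y = 1 := by ring
  have h := convexOn_exp.2 (Set.mem_univ (0:ℝ)) (Set.mem_univ (g*Y)) ha hb hab
  simp only [smul_eq_mul, mul_zero, zero_add, Real.exp_zero, mul_one] at h
  have harg : t/Y * (g*Y) = g * t := by field_simp
  rw [harg] at h
  have heq : (1 - t/Y) + t/Y * Real.exp (g*Y) = 1 + t * ((Real.exp (g * Y) - 1) / Y) := by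
    field_simp; ring
  linarith

lemma cf_ge {γ Y : ℝ} (hγ : 0 < γ) (hY : 0 < Y) : γ ≤ (Real.exp (γ*Y) - 1)/Y := by
  rw [le_div_iff₀ hY]
  have := Real.add_one_le_exp (γ*Y)
  linarith

lemma cf_le {γ Y : ℝ} (hγ : 0 < γ) (hY : 0 < Y) :
    (Real.exp (γ*Y) - 1)/Y ≤ γ * Real.exp (γ*Y) := by
  rw [div_le_iff₀ hY]
  have h := Real.add_one_le_exp (-(γ*Y))
  have h2 : (1 - γ*Y) * Real.exp (γ*Y) ≤ 1 := by
    have h3 : Real.exp (-(γ*Y)) * Real.exp (γ*Y) = 1 := by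
      rw [← Real.exp_add]; simp
    nlinarith [Real.exp_pos (γ*Y)]
  nlinarith [Real.exp_pos (γ*Y)]

lemma term_lower {γ a Y : ℝ} (hγ : 0 < γ) (ha : 0 ≤ a) (hY : 0 < Y)
    {n i : ℕ} (hi1 : 1 ≤ i) (hin : i ≤ n) :
    Real.exp (-a) * (((i:ℝ)/n) ^ ((Real.exp (γ*Y) - 1)/Y * a)
        - Real.exp (-((Real.exp (γ*Y) - 1)/Y * a * Y)))
      ≤ Real.exp (-(((n:ℝ)/i) ^ γ * a)) := by
  set cv := (Real.exp (γ*Y) - 1)/Y with hcv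
  have hc : γ ≤ cv := cf_ge hγ hY
  have hc0 : 0 < cv := lt_of_lt_of_le hγ hc
  set t := Real.log ((n:ℝ)/i) with htdef
  have ht0 : 0 ≤ t := Real.log_nonneg (one_le_ratio hi1 hin)
  have hr := ratio_pos hi1 hin
  have hpow : ((i:ℝ)/n) ^ (cv * a) = Real.exp (-(cv * a * t)) := pow_ratio_eq hi1 hin
  rcases le_or_gt t Y with hcase | hcase
  · -- chord case
    have hch : ((n:ℝ)/i) ^ γ ≤ 1 + cv * t := by
      rw [Real.rpow_def_of_pos hr, mul_comm (Real.log ((n:ℝ)/i)) γ]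
      have := exp_chord (g := γ) hY ht0 hcase
      rw [← hcv] at this
      linarith [this]
    have h2 : ((n:ℝ)/i) ^ γ * a ≤ (1 + cv * t) * a := mul_le_mul_of_nonneg_right hch ha
    have h3 : Real.exp (-((1 + cv*t) * a)) ≤ Real.exp (-(((n:ℝ)/i) ^ γ * a)) := by
      apply Real.exp_le_exp.mpr; linarith
    have h4 : Real.exp (-a) * ((i:ℝ)/n) ^ (cv * a) = Real.exp (-((1 + cv*t) * a)) := by
      rw [hpow, ← Real.exp_add]; congr 1; ring
    have h5 : Real.exp (-a) * (((i:ℝ)/n) ^ (cv * a) - Real.exp (-(cv * a * Y)))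
        ≤ Real.exp (-a) * ((i:ℝ)/n) ^ (cv * a) := by
      have : 0 ≤ Real.exp (-(cv*a*Y)) := (Real.exp_pos _).le
      nlinarith [Real.exp_pos (-a)]
    linarith
  · -- far case: RHS of product ≤ 0
    have hq0 : 0 ≤ cv * a := by positivity
    have h6 : ((i:ℝ)/n) ^ (cv * a) ≤ Real.exp (-(cv * a * Y)) := by
      rw [hpow]
      apply Real.exp_le_exp.mpr
      nlinarith
    have h7 : Real.exp (-a) * (((i:ℝ)/n) ^ (cv * a) - Real.exp (-(cv * a * Y))) ≤ 0 := by
      apply mul_nonpos_of_nonneg_of_nonpos (Real.exp_pos _).le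
      linarith
    exact le_trans h7 (Real.exp_pos _).le

end GumbelAux3

open MeasureTheory ProbabilityTheory Filter

namespace GumbelAux4

noncomputable def af (γ x : ℝ) (n : ℕ) : ℝ :=
  x + (Real.log ((n:ℝ)/γ) - Real.log (Real.log (n:ℝ)))

noncomputable def Yf (n : ℕ) : ℝ := ((1 + Real.log (n:ℝ)) ^ ((2:ℝ)⁻¹))⁻¹

noncomputable def cf (γ : ℝ) (n : ℕ) : ℝ := (Real.exp (γ * Yf n) - 1) / Yf n

lemma log_nat_nonneg (n : ℕ) : 0 ≤ Real.log (n:ℝ) := by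
  rcases Nat.eq_zero_or_pos n with h | h
  · simp [h]
  · exact Real.log_natCast_nonneg n

lemma Yf_pos (n : ℕ) : 0 < Yf n := by
  have := log_nat_nonneg n
  have : (0:ℝ) < 1 + Real.log (n:ℝ) := by linarith
  unfold Yf
  positivity

lemma tendsto_log_nat : Tendsto (fun n : ℕ => Real.log (n:ℝ)) atTop atTop :=
  Real.tendsto_log_atTop.comp tendsto_natCast_atTop_atTop

lemma tendsto_loglog_div :
    Tendsto (fun y : ℝ => Real.log y / y) atTop (nhds 0) := by
  have h := Real.tendsto_pow_log_div_mul_add_atTop 1 0 1 one_ne_zero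
  simpa using h

lemma tendsto_Yf : Tendsto Yf atTop (nhds 0) := by
  apply Filter.Tendsto.inv_tendsto_atTop
  apply (tendsto_rpow_atTop (by norm_num : (0:ℝ) < (2:ℝ)⁻¹)).comp
  exact tendsto_atTop_add_const_left _ 1 tendsto_log_nat

lemma tendsto_cf (γ : ℝ) (hγ : 0 < γ) : Tendsto (cf γ) atTop (nhds γ) := by
  have hub : Tendsto (fun n => γ * Real.exp (γ * Yf n)) atTop (nhds γ) := by
    have : Tendsto (fun n => Real.exp (γ * Yf n)) atTop (nhds 1) := by
      have harg : Tendsto (fun n => γ * Yf n) atTop (nhds 0) := by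
        simpa using tendsto_Yf.const_mul γ
      simpa [Function.comp_def] using (Real.continuous_exp.tendsto 0).comp harg
    simpa using this.const_mul γ
  refine tendsto_of_tendsto_of_tendsto_of_le_of_le' tendsto_const_nhds hub ?_ ?_
  · exact Eventually.of_forall fun n => GumbelAux3.cf_ge hγ (Yf_pos n)
  · exact Eventually.of_forall fun n => GumbelAux3.cf_le hγ (Yf_pos n)

end GumbelAux4

open MeasureTheory ProbabilityTheory Filter
open GumbelAux4

namespace GumbelAux5

lemma af_eq (γ x : ℝ) (hγ : 0 < γ) {n : ℕ} (hn : 1 ≤ n) :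
    af γ x n = (x - Real.log γ) + (Real.log (n:ℝ) - Real.log (Real.log (n:ℝ))) := by
  have hn0 : (0:ℝ) < n := by exact_mod_cast hn
  unfold af
  rw [Real.log_div hn0.ne' hγ.ne']
  ring

lemma tendsto_loglog_div_log :
    Tendsto (fun n : ℕ => Real.log (Real.log (n:ℝ)) / Real.log (n:ℝ)) atTop (nhds 0) :=
  tendsto_loglog_div.comp tendsto_log_nat

lemma tendsto_af (γ x : ℝ) (hγ : 0 < γ) : Tendsto (af γ x) atTop atTop := by
  have hhalf : ∀ᶠ n : ℕ in atTop,
      (x - Real.log γ) + Real.log (n:ℝ) / 2 ≤ af γ x n := by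
    have h1 : ∀ᶠ n : ℕ in atTop, Real.log (Real.log (n:ℝ)) / Real.log (n:ℝ) ≤ 1/2 := by
      filter_upwards [tendsto_loglog_div_log.eventually (eventually_le_nhds (by norm_num : (0:ℝ) < 1/2))] with n hn using hn
    filter_upwards [h1, tendsto_log_nat.eventually_ge_atTop 1, eventually_ge_atTop 1]
      with n hn hL hn1
    rw [af_eq γ x hγ hn1]
    have hLpos : (0:ℝ) < Real.log (n:ℝ) := by linarith
    have : Real.log (Real.log (n:ℝ)) ≤ Real.log (n:ℝ) / 2 := by
      rw [div_le_iff₀ hLpos] at hn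
      linarith
    linarith
  apply tendsto_atTop_mono' _ hhalf
  apply tendsto_atTop_add_const_left
  exact (tendsto_log_nat.atTop_div_const (by norm_num))

lemma exp_neg_af (γ x : ℝ) (hγ : 0 < γ) {n : ℕ} (hn : 2 ≤ n) :
    Real.exp (-(af γ x n)) = Real.exp (-x) * (γ * Real.log (n:ℝ) / n) := by
  have hn0 : (0:ℝ) < n := by positivity
  have hn1 : (1:ℝ) < n := by exact_mod_cast hn
  have hL : 0 < Real.log (n:ℝ) := Real.log_pos hn1
  have hng : (0:ℝ) < (n:ℝ)/γ := by positivity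
  unfold af
  rw [neg_add, neg_sub, Real.exp_add, Real.exp_sub, Real.exp_neg, Real.exp_log hng,
    Real.exp_log hL]
  field_simp

lemma tendsto_af_div_log (γ x : ℝ) (hγ : 0 < γ) :
    Tendsto (fun n : ℕ => af γ x n / Real.log (n:ℝ)) atTop (nhds 1) := by
  have hinv : Tendsto (fun n : ℕ => (Real.log (n:ℝ))⁻¹) atTop (nhds 0) :=
    tendsto_log_nat.inv_tendsto_atTop
  have h2 : Tendsto (fun n : ℕ => (x - Real.log γ) * (Real.log (n:ℝ))⁻¹ +
      ((1:ℝ) - Real.log (Real.log (n:ℝ)) / Real.log (n:ℝ))) atTop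
      (nhds ((x - Real.log γ) * 0 + ((1:ℝ) - 0))) :=
    (hinv.const_mul _).add (tendsto_const_nhds.sub tendsto_loglog_div_log)
  rw [show (x - Real.log γ) * 0 + ((1:ℝ) - 0) = 1 by ring] at h2
  apply h2.congr'
  filter_upwards [tendsto_log_nat.eventually_gt_atTop 0, eventually_ge_atTop 1] with n hL hn1
  rw [af_eq γ x hγ hn1]
  field_simp
  try ring

lemma tendsto_ratio (γ x : ℝ) (hγ : 0 < γ) (c : ℕ → ℝ) (hc : Tendsto c atTop (nhds γ)) :
    Tendsto (fun n : ℕ => γ * Real.log (n:ℝ) / (c n * af γ x n + 1)) atTop (nhds 1) := by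
  have hinv : Tendsto (fun n : ℕ => (Real.log (n:ℝ))⁻¹) atTop (nhds 0) :=
    tendsto_log_nat.inv_tendsto_atTop
  have hden : Tendsto (fun n : ℕ => c n * (af γ x n / Real.log (n:ℝ)) + (Real.log (n:ℝ))⁻¹)
      atTop (nhds (γ * 1 + 0)) :=
    (hc.mul (tendsto_af_div_log γ x hγ)).add hinv
  rw [show γ * 1 + 0 = γ by ring] at hden
  have hlim : Tendsto (fun n : ℕ =>
      γ / (c n * (af γ x n / Real.log (n:ℝ)) + (Real.log (n:ℝ))⁻¹)) atTop (nhds (γ / γ)) :=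
    tendsto_const_nhds.div hden hγ.ne'
  rw [div_self hγ.ne'] at hlim
  apply hlim.congr'
  filter_upwards [tendsto_log_nat.eventually_gt_atTop 0,
    hc.eventually (eventually_gt_nhds (by linarith : γ/2 < γ)),
    (tendsto_af γ x hγ).eventually_ge_atTop 0] with n hL hcn haf
  have hden0 : (0:ℝ) < c n * af γ x n + 1 := by nlinarith
  rw [eq_comm]
  field_simp
  try ring

end GumbelAux5

open MeasureTheory ProbabilityTheory Filter
open GumbelAux3 GumbelAux4 GumbelAux5

namespace GumbelAux6

lemma tendsto_R : Tendsto (fun n : ℕ => (Real.log (n:ℝ)) ^ ((2:ℝ)⁻¹)) atTop atTop :=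
  (tendsto_rpow_atTop (by norm_num)).comp tendsto_log_nat

lemma tendsto_logL_div_R :
    Tendsto (fun n : ℕ => Real.log (Real.log (n:ℝ)) / (Real.log (n:ℝ)) ^ ((2:ℝ)⁻¹))
      atTop (nhds 0) := by
  have h := (isLittleO_log_rpow_atTop (by norm_num : (0:ℝ) < (2:ℝ)⁻¹)).tendsto_div_nhds_zero
  exact h.comp tendsto_log_nat

lemma af_ge_halfL (γ x : ℝ) (hγ : 0 < γ) :
    ∀ᶠ n : ℕ in atTop, Real.log (n:ℝ) / 2 ≤ af γ x n := by
  filter_upwards [(tendsto_af_div_log γ x hγ).eventually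
      (eventually_ge_nhds (by norm_num : (1:ℝ)/2 < 1)),
    tendsto_log_nat.eventually_gt_atTop 0] with n h1 hL
  rw [le_div_iff₀ hL] at h1
  linarith

lemma tendsto_tail (γ x : ℝ) (hγ : 0 < γ) :
    Tendsto (fun n : ℕ => Real.log (n:ℝ) *
      Real.exp (-(cf γ n * af γ x n * Yf n))) atTop (nhds 0) := by
  set R : ℕ → ℝ := fun n => (Real.log (n:ℝ)) ^ ((2:ℝ)⁻¹) with hR
  have hub : Tendsto (fun n : ℕ => Real.exp (-(γ/8) * R n)) atTop (nhds 0) := by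
    apply Real.tendsto_exp_atBot.comp
    exact Tendsto.const_mul_atTop_of_neg (by linarith : -(γ/8) < 0) tendsto_R
  refine tendsto_of_tendsto_of_tendsto_of_le_of_le' tendsto_const_nhds hub ?_ ?_
  · filter_upwards [tendsto_log_nat.eventually_ge_atTop 0] with n hL
    positivity
  · filter_upwards [tendsto_log_nat.eventually_ge_atTop 1, af_ge_halfL γ x hγ,
      (tendsto_logL_div_R).eventually (eventually_le_nhds (by linarith : (0:ℝ) < γ/8))]
      with n hL haf hlog
    have hL0 : (0:ℝ) < Real.log (n:ℝ) := by linarith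
    have hR0 : (0:ℝ) < R n := by
      rw [hR]; positivity
    have hR1 : R n * R n = Real.log (n:ℝ) := by
      rw [hR, ← Real.rpow_add hL0]
      norm_num
    -- lower bound on q * Y
    have hc : γ ≤ cf γ n := cf_ge hγ (Yf_pos n)
    have hYlb : (2 * R n)⁻¹ ≤ Yf n := by
      unfold Yf
      apply inv_anti₀ (by positivity)
      calc (1 + Real.log (n:ℝ)) ^ ((2:ℝ)⁻¹)
          ≤ (2 * Real.log (n:ℝ)) ^ ((2:ℝ)⁻¹) := by
            apply Real.rpow_le_rpow (by linarith) (by linarith) (by norm_num)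
        _ = (2:ℝ) ^ ((2:ℝ)⁻¹) * R n := by
            rw [hR, Real.mul_rpow (by norm_num) hL0.le]
        _ ≤ 2 * R n := by
            have h2 : (2:ℝ) ^ ((2:ℝ)⁻¹) ≤ 2 := by
              calc (2:ℝ) ^ ((2:ℝ)⁻¹) ≤ (2:ℝ) ^ (1:ℝ) :=
                    Real.rpow_le_rpow_of_exponent_le (by norm_num) (by norm_num)
                _ = 2 := Real.rpow_one 2
            nlinarith
    have hq : γ * R n / 4 ≤ cf γ n * af γ x n * Yf n := by
      have h1 : γ * (Real.log (n:ℝ)/2) * (2 * R n)⁻¹ ≤ cf γ n * af γ x n * Yf n := by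
        have hafpos : 0 ≤ Real.log (n:ℝ)/2 := by linarith
        have hcf0 : 0 ≤ cf γ n := le_trans hγ.le hc
        apply mul_le_mul (mul_le_mul hc haf hafpos hcf0) hYlb
        · rw [inv_nonneg]; nlinarith
        · exact mul_nonneg hcf0 (le_trans hafpos haf)
      calc γ * R n / 4 = γ * (Real.log (n:ℝ)/2) * (2 * R n)⁻¹ := by
            rw [← hR1]; field_simp; ring
        _ ≤ _ := h1
    -- conclude
    have hexplog : Real.log (n:ℝ) = Real.exp (Real.log (Real.log (n:ℝ))) := by
      rw [Real.exp_log hL0]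
    calc Real.log (n:ℝ) * Real.exp (-(cf γ n * af γ x n * Yf n))
        = Real.exp (Real.log (Real.log (n:ℝ)) - cf γ n * af γ x n * Yf n) := by
          rw [Real.exp_sub, ← hexplog, Real.exp_neg, div_eq_mul_inv]
      _ ≤ Real.exp (-(γ/8) * R n) := by
          apply Real.exp_le_exp.mpr
          rw [div_le_iff₀ hR0] at hlog
          linarith
end GumbelAux6

open MeasureTheory ProbabilityTheory Filter
open GumbelAux2 GumbelAux3 GumbelAux4 GumbelAux5 GumbelAux6

namespace GumbelAux7

lemma key_sum_tendsto (γ x : ℝ) (hγ : 0 < γ) :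
    Tendsto (fun n : ℕ => ∑ i ∈ Finset.Icc 1 n,
        Real.exp (-(((n:ℝ)/i) ^ γ * af γ x n))) atTop (nhds (Real.exp (-x))) := by
  have hLn : Tendsto (fun n : ℕ => Real.log (n:ℝ) / n) atTop (nhds 0) :=
    tendsto_loglog_div.comp tendsto_natCast_atTop_atTop
  set UB : ℕ → ℝ := fun n => Real.exp (-x) * (γ * Real.log (n:ℝ) / (γ * af γ x n + 1))
      + Real.exp (-x) * (γ * (Real.log (n:ℝ) / n)) with hUBdef
  set LB : ℕ → ℝ := fun n => Real.exp (-x) * (γ * Real.log (n:ℝ) / (cf γ n * af γ x n + 1))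
      - Real.exp (-x) * (γ * (Real.log (n:ℝ) * Real.exp (-(cf γ n * af γ x n * Yf n)))) with hLBdef
  have hUB : Tendsto UB atTop (nhds (Real.exp (-x))) := by
    have h1 : Tendsto (fun n : ℕ => γ * Real.log (n:ℝ) / (γ * af γ x n + 1)) atTop (nhds 1) :=
      tendsto_ratio γ x hγ (fun _ => γ) tendsto_const_nhds
    have h := (h1.const_mul (Real.exp (-x))).add ((hLn.const_mul γ).const_mul (Real.exp (-x)))
    rw [show Real.exp (-x) * 1 + Real.exp (-x) * (γ * 0) = Real.exp (-x) by ring] at h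
    exact h
  have hLB : Tendsto LB atTop (nhds (Real.exp (-x))) := by
    have h1 : Tendsto (fun n : ℕ => γ * Real.log (n:ℝ) / (cf γ n * af γ x n + 1)) atTop (nhds 1) :=
      tendsto_ratio γ x hγ (cf γ) (tendsto_cf γ hγ)
    have h := (h1.const_mul (Real.exp (-x))).sub
      (((tendsto_tail γ x hγ).const_mul γ).const_mul (Real.exp (-x)))
    rw [show Real.exp (-x) * 1 - Real.exp (-x) * (γ * 0) = Real.exp (-x) by ring] at h
    exact h
  refine tendsto_of_tendsto_of_tendsto_of_le_of_le' hLB hUB ?_ ?_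
  · -- LB ≤ S eventually
    filter_upwards [eventually_ge_atTop 2, (tendsto_af γ x hγ).eventually_ge_atTop 1]
      with n hn2 ha1
    have hn1 : 1 ≤ n := by omega
    have hn0 : (0:ℝ) < n := by positivity
    have ha0 : 0 ≤ af γ x n := by linarith
    have hY := Yf_pos n
    have hcf : γ ≤ cf γ n := cf_ge hγ hY
    have hq0 : 0 < cf γ n * af γ x n := by nlinarith
    have hstep1 : ∑ i ∈ Finset.Icc 1 n, Real.exp (-(af γ x n)) *
        (((i:ℝ)/n) ^ (cf γ n * af γ x n) - Real.exp (-(cf γ n * af γ x n * Yf n)))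
        ≤ ∑ i ∈ Finset.Icc 1 n, Real.exp (-(((n:ℝ)/i) ^ γ * af γ x n)) := by
      apply Finset.sum_le_sum
      intro i hi
      rw [Finset.mem_Icc] at hi
      have := term_lower (n := n) (i := i) hγ ha0 hY hi.1 hi.2
      unfold cf
      exact this
    have hstep2 : ∑ i ∈ Finset.Icc 1 n, Real.exp (-(af γ x n)) *
        (((i:ℝ)/n) ^ (cf γ n * af γ x n) - Real.exp (-(cf γ n * af γ x n * Yf n)))
        = Real.exp (-(af γ x n)) * ((∑ i ∈ Finset.Icc 1 n, ((i:ℝ)/n) ^ (cf γ n * af γ x n))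
          - (n:ℝ) * Real.exp (-(cf γ n * af γ x n * Yf n))) := by
      rw [← Finset.mul_sum, Finset.sum_sub_distrib, Finset.sum_const, Nat.card_Icc]
      simp [nsmul_eq_mul]
    have hstep3 : Real.exp (-(af γ x n)) * ((n:ℝ)/(cf γ n * af γ x n + 1)
        - (n:ℝ) * Real.exp (-(cf γ n * af γ x n * Yf n)))
        ≤ ∑ i ∈ Finset.Icc 1 n, Real.exp (-(((n:ℝ)/i) ^ γ * af γ x n)) := by
      refine le_trans ?_ (hstep2 ▸ hstep1)
      apply mul_le_mul_of_nonneg_left _ (Real.exp_pos _).le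
      have := le_sum_pow hq0 n hn1
      linarith
    refine le_trans (le_of_eq ?_) hstep3
    rw [exp_neg_af γ x hγ hn2, hLBdef]
    have hden : (0:ℝ) < cf γ n * af γ x n + 1 := by linarith
    field_simp
  · -- S ≤ UB eventually
    filter_upwards [eventually_ge_atTop 2, (tendsto_af γ x hγ).eventually_ge_atTop 1]
      with n hn2 ha1
    have hn1 : 1 ≤ n := by omega
    have hn0 : (0:ℝ) < n := by positivity
    have ha0 : 0 ≤ af γ x n := by linarith
    have hp0 : 0 < γ * af γ x n := by nlinarith
    have hstep1 : ∑ i ∈ Finset.Icc 1 n, Real.exp (-(((n:ℝ)/i) ^ γ * af γ x n))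
        ≤ ∑ i ∈ Finset.Icc 1 n, Real.exp (-(af γ x n)) * ((i:ℝ)/n) ^ (γ * af γ x n) := by
      apply Finset.sum_le_sum
      intro i hi
      rw [Finset.mem_Icc] at hi
      exact term_upper hγ ha0 hi.1 hi.2
    have hstep2 : ∑ i ∈ Finset.Icc 1 n, Real.exp (-(af γ x n)) * ((i:ℝ)/n) ^ (γ * af γ x n)
        ≤ Real.exp (-(af γ x n)) * ((n:ℝ)/(γ * af γ x n + 1) + 1) := by
      rw [← Finset.mul_sum]
      apply mul_le_mul_of_nonneg_left (sum_pow_le hp0 n hn1) (Real.exp_pos _).le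
    refine le_trans (le_trans hstep1 hstep2) (le_of_eq ?_)
    rw [exp_neg_af γ x hγ hn2, hUBdef]
    have hden : (0:ℝ) < γ * af γ x n + 1 := by linarith
    field_simp

end GumbelAux7

open MeasureTheory ProbabilityTheory Filter
open GumbelAux GumbelAux2 GumbelAux3 GumbelAux4 GumbelAux5 GumbelAux6 GumbelAux7

namespace GumbelAux8

lemma exp_term_le_half {γ x : ℝ} (hγ : 0 < γ) {n i : ℕ} (hi1 : 1 ≤ i) (hin : i ≤ n)
    (ha0 : 0 ≤ af γ x n) :
    Real.exp (-(((n:ℝ)/i) ^ γ * af γ x n)) ≤ Real.exp (-(af γ x n)) := by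
  apply Real.exp_le_exp.mpr
  have h1 : (1:ℝ) ≤ ((n:ℝ)/i) ^ γ :=
    Real.one_le_rpow (one_le_ratio hi1 hin) hγ.le
  nlinarith

lemma key_prod_tendsto (γ x : ℝ) (hγ : 0 < γ) :
    Tendsto (fun n : ℕ => ∏ i ∈ Finset.Icc 1 n,
        (1 - Real.exp (-(((n:ℝ)/i) ^ γ * af γ x n)))) atTop
      (nhds (Real.exp (-(Real.exp (-x))))) := by
  set S : ℕ → ℝ := fun n => ∑ i ∈ Finset.Icc 1 n,
      Real.exp (-(((n:ℝ)/i) ^ γ * af γ x n)) with hSdef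
  set P : ℕ → ℝ := fun n => ∏ i ∈ Finset.Icc 1 n,
      (1 - Real.exp (-(((n:ℝ)/i) ^ γ * af γ x n))) with hPdef
  have hS := key_sum_tendsto γ x hγ
  have hE : Tendsto (fun n : ℕ => Real.exp (-(af γ x n))) atTop (nhds 0) := by
    apply Real.tendsto_exp_atBot.comp
    exact tendsto_neg_atBot_iff.mpr (tendsto_af γ x hγ)
  -- eventual hypotheses
  have hgood : ∀ᶠ n : ℕ in atTop, 1 ≤ n ∧ 0 ≤ af γ x n ∧ Real.exp (-(af γ x n)) ≤ 1/2 := by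
    filter_upwards [eventually_ge_atTop 1, (tendsto_af γ x hγ).eventually_ge_atTop 0,
      hE.eventually (eventually_le_nhds (by norm_num : (0:ℝ) < 1/2))] with n h1 h2 h3
    exact ⟨h1, h2, h3⟩
  -- |log P n + S n| ≤ 2 * exp(-a n) * S n  eventually
  have hlogP : ∀ᶠ n : ℕ in atTop,
      |Real.log (P n) + S n| ≤ 2 * Real.exp (-(af γ x n)) * S n ∧ 0 < P n := by
    filter_upwards [hgood] with n hn
    obtain ⟨hn1, ha0, hhalf⟩ := hn
    have hu : ∀ i ∈ Finset.Icc 1 n, 0 < Real.exp (-(((n:ℝ)/i) ^ γ * af γ x n)) ∧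
        Real.exp (-(((n:ℝ)/i) ^ γ * af γ x n)) ≤ 1/2 := by
      intro i hi
      rw [Finset.mem_Icc] at hi
      exact ⟨Real.exp_pos _, le_trans (exp_term_le_half hγ hi.1 hi.2 ha0) hhalf⟩
    have hPpos : 0 < P n := by
      rw [hPdef]
      apply Finset.prod_pos
      intro i hi
      have := (hu i hi).2
      linarith
    constructor
    · have hlog : Real.log (P n) = ∑ i ∈ Finset.Icc 1 n,
          Real.log (1 - Real.exp (-(((n:ℝ)/i) ^ γ * af γ x n))) := by
        rw [hPdef]
        apply Real.log_prod
        intro i hi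
        have := (hu i hi).2
        intro hzero
        nlinarith
      rw [hlog, hSdef, ← Finset.sum_add_distrib]
      calc |∑ i ∈ Finset.Icc 1 n, (Real.log (1 - Real.exp (-(((n:ℝ)/i) ^ γ * af γ x n)))
              + Real.exp (-(((n:ℝ)/i) ^ γ * af γ x n)))|
          ≤ ∑ i ∈ Finset.Icc 1 n, |Real.log (1 - Real.exp (-(((n:ℝ)/i) ^ γ * af γ x n)))
              + Real.exp (-(((n:ℝ)/i) ^ γ * af γ x n))| := Finset.abs_sum_le_sum_abs _ _
        _ ≤ ∑ i ∈ Finset.Icc 1 n, 2 * Real.exp (-(af γ x n))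
              * Real.exp (-(((n:ℝ)/i) ^ γ * af γ x n)) := by
            apply Finset.sum_le_sum
            intro i hi
            obtain ⟨hpos, hle⟩ := hu i hi
            have hub := exp_term_le_half hγ (Finset.mem_Icc.mp hi).1 (Finset.mem_Icc.mp hi).2 ha0
            calc |Real.log (1 - Real.exp (-(((n:ℝ)/i) ^ γ * af γ x n)))
                  + Real.exp (-(((n:ℝ)/i) ^ γ * af γ x n))|
                ≤ 2 * Real.exp (-(((n:ℝ)/i) ^ γ * af γ x n)) ^ 2 :=
                  abs_log_one_sub_add_le hpos.le hle
              _ ≤ 2 * Real.exp (-(af γ x n)) * Real.exp (-(((n:ℝ)/i) ^ γ * af γ x n)) := by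
                  nlinarith
        _ = 2 * Real.exp (-(af γ x n)) * S n := by
            rw [hSdef, Finset.mul_sum]
    · exact hPpos
  -- log P n + S n → 0
  have hbound : Tendsto (fun n : ℕ => 2 * Real.exp (-(af γ x n)) * S n) atTop (nhds 0) := by
    have := ((hE.const_mul 2).mul hS)
    rw [show (2:ℝ) * 0 * Real.exp (-x) = 0 by ring] at this
    exact this
  have hzero : Tendsto (fun n : ℕ => Real.log (P n) + S n) atTop (nhds 0) := by
    apply squeeze_zero_norm' _ hbound
    filter_upwards [hlogP] with n hn
    exact hn.1
  have hlogtend : Tendsto (fun n : ℕ => Real.log (P n)) atTop (nhds (-(Real.exp (-x)))) := by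
    have := hzero.sub hS
    rw [show (0:ℝ) - Real.exp (-x) = -(Real.exp (-x)) by ring] at this
    apply this.congr
    intro n
    ring
  have hfinal : Tendsto (fun n : ℕ => Real.exp (Real.log (P n))) atTop
      (nhds (Real.exp (-(Real.exp (-x))))) :=
    (Real.continuous_exp.tendsto _).comp hlogtend
  apply hfinal.congr'
  filter_upwards [hlogP] with n hn
  rw [Real.exp_log hn.2]

end GumbelAux8

open MeasureTheory ProbabilityTheory Filter
open GumbelAux GumbelAux2 GumbelAux3 GumbelAux4 GumbelAux5 GumbelAux6 GumbelAux7 GumbelAux8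


/-- For i.i.d. unit exponentials `X_i` and `γ > 0`, with
`M_n = max_{1 ≤ i ≤ n} i^γ X_i` and `β_n = log(n/γ) - log log n`, the quantity
`M_n / n^γ - β_n` converges in distribution to a standard Gumbel random variable. -/
theorem weighted_exponential_max_gumbel
    {Ω : Type*} [MeasurableSpace Ω] (μ : Measure Ω) [IsProbabilityMeasure μ]
    (X : ℕ → Ω → ℝ)
    (hXmeas : ∀ i, Measurable (X i))
    (hXindep : iIndepFun X μ)
    (hXexp : ∀ i, ∀ x : ℝ, 0 ≤ x →
      μ {ω | X i ω ≤ x} = ENNReal.ofReal (1 - Real.exp (-x)))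
    (γ : ℝ) (hγ : 0 < γ)
    (M : ℕ → Ω → ℝ)
    (hM : ∀ n ω, M n ω = sSup {x | ∃ i : ℕ, 1 ≤ i ∧ i ≤ n ∧ x = (i : ℝ) ^ γ * X i ω})
    (β : ℕ → ℝ)
    (hβ : ∀ n, β n = Real.log ((n : ℝ) / γ) - Real.log (Real.log (n : ℝ))) :
    ∀ x : ℝ,
      Tendsto
        (fun n : ℕ => (μ {ω | M n ω / (n : ℝ) ^ γ - β n ≤ x}).toReal)
        atTop
        (nhds (Real.exp (-Real.exp (-x)))) := by
  intro x
  have hkey := key_prod_tendsto γ x hγ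
  have hgumbel : Real.exp (-(Real.exp (-x))) = Real.exp (-Real.exp (-x)) := rfl
  rw [hgumbel] at hkey
  apply hkey.congr'
  filter_upwards [eventually_ge_atTop 1, (tendsto_af γ x hγ).eventually_ge_atTop 0]
    with n hn1 ha0
  -- notation
  set c : ℕ → ℝ := fun i => ((n:ℝ)/i)^γ * af γ x n with hc
  have hnR : (0:ℝ) < n := by
    have : (1:ℕ) ≤ n := hn1
    exact_mod_cast Nat.lt_of_lt_of_le Nat.zero_lt_one this
  have hpow : (0:ℝ) < (n:ℝ)^γ := Real.rpow_pos_of_pos hnR γ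
  have haf : af γ x n = x + β n := by
    rw [hβ]; unfold af; ring
  -- step 1 : set equality
  have hsetEq : {ω | M n ω / (n:ℝ)^γ - β n ≤ x}
      = ⋂ i ∈ Finset.Icc 1 n, X i ⁻¹' (Set.Iic (c i)) := by
    ext ω
    simp only [Set.mem_setOf_eq, Set.mem_iInter, Set.mem_preimage, Set.mem_Iic]
    have himg : {y : ℝ | ∃ i : ℕ, 1 ≤ i ∧ i ≤ n ∧ y = (i:ℝ)^γ * X i ω}
        = ↑((Finset.Icc 1 n).image (fun i : ℕ => (i:ℝ)^γ * X i ω)) := by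
      ext y
      simp only [Finset.coe_image, Set.mem_image, Finset.mem_coe, Finset.mem_Icc,
        Set.mem_setOf_eq]
      constructor
      · rintro ⟨i, h1, h2, rfl⟩; exact ⟨i, ⟨h1, h2⟩, rfl⟩
      · rintro ⟨i, ⟨h1, h2⟩, rfl⟩; exact ⟨i, h1, h2, rfl⟩
    have hne : ((Finset.Icc 1 n).image (fun i : ℕ => (i:ℝ)^γ * X i ω)).Nonempty :=
      Finset.Nonempty.image (Finset.nonempty_Icc.mpr hn1) _
    have hiff : ∀ i:ℕ, 1 ≤ i → i ≤ n →
        ((i:ℝ)^γ * X i ω ≤ (x + β n) * (n:ℝ)^γ ↔ X i ω ≤ c i) := by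
      intro i hi1 hin
      have hiR : (0:ℝ) < i := by exact_mod_cast hi1
      have hipos : (0:ℝ) < (i:ℝ)^γ := Real.rpow_pos_of_pos hiR γ
      have hdiv : ((n:ℝ)/i)^γ = (n:ℝ)^γ / (i:ℝ)^γ := Real.div_rpow hnR.le hiR.le γ
      rw [hc]
      simp only
      rw [haf, hdiv, div_mul_eq_mul_div, le_div_iff₀ hipos]
      constructor
      · intro h; nlinarith
      · intro h; nlinarith
    rw [hM n ω, himg, hne.csSup_eq_max', sub_le_iff_le_add, div_le_iff₀ hpow]
    rw [show x + β n = (x + β n) by rfl]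
    constructor
    · intro h i hi
      rw [Finset.mem_Icc] at hi
      have hmem : (i:ℝ)^γ * X i ω ∈ (Finset.Icc 1 n).image (fun i : ℕ => (i:ℝ)^γ * X i ω) :=
        Finset.mem_image_of_mem _ (Finset.mem_Icc.mpr hi)
      have := le_trans (Finset.le_max' _ _ hmem) h
      exact (hiff i hi.1 hi.2).mp this
    · intro h
      apply Finset.max'_le
      intro y hy
      rw [Finset.mem_image] at hy
      obtain ⟨i, hi, rfl⟩ := hy
      rw [Finset.mem_Icc] at hi
      exact (hiff i hi.1 hi.2).mpr (h i (Finset.mem_Icc.mpr hi))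
  -- step 2 : independence product
  have hc0 : ∀ i ∈ Finset.Icc 1 n, 0 ≤ c i := by
    intro i hi
    rw [Finset.mem_Icc] at hi
    have hr := ratio_pos hi.1 hi.2
    have : (0:ℝ) ≤ ((n:ℝ)/i)^γ := (Real.rpow_pos_of_pos hr γ).le
    rw [hc]
    exact mul_nonneg this ha0
  have hfact : ∀ i ∈ Finset.Icc 1 n, (0:ℝ) ≤ 1 - Real.exp (-(c i)) := by
    intro i hi
    have := hc0 i hi
    have hle : Real.exp (-(c i)) ≤ 1 := by
      rw [← Real.exp_zero]
      exact Real.exp_le_exp.mpr (by linarith)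
    linarith
  have hmeasEq : μ {ω | M n ω / (n:ℝ)^γ - β n ≤ x}
      = ENNReal.ofReal (∏ i ∈ Finset.Icc 1 n, (1 - Real.exp (-(c i)))) := by
    rw [hsetEq]
    rw [hXindep.meas_biInter (fun i _ => ⟨Set.Iic (c i), measurableSet_Iic, rfl⟩)]
    rw [ENNReal.ofReal_prod_of_nonneg hfact]
    apply Finset.prod_congr rfl
    intro i hi
    have : X i ⁻¹' (Set.Iic (c i)) = {ω | X i ω ≤ c i} := rfl
    rw [this, hXexp i (c i) (hc0 i hi)]
  rw [hmeasEq, ENNReal.toReal_ofReal (Finset.prod_nonneg hfact)]
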